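/- Let −1 < a < 0 and 0 < p < 1 be real numbers and let m be a positive integer. Then there exist C > 0 and N₀ such that for all integers N ≥ N₀, | ∫₀¹ (1−pt)^N (1−t)^a dt − Σ_{k=0}^{m−1} (−1)^k C(a,k) p^{−k−1} B(k+1, N+1) | ≤ C·N^{−m}, where C(a,k) = a(a−1)⋯(a−k+1)/k! is the generalized binomial coefficient and B denotes the Euler beta function. -/

import Mathlib

open Finset

/-- The Euler beta function `B(a,b) = ∫₀¹ t^(a-1) (1-t)^(b-1) dt`. -/
noncomputable def eulerBeta (a b : ℝ) : ℝ :=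
  ∫ t in (0 : ℝ)..1, t ^ (a - 1) * (1 - t) ^ (b - 1)

/-- The generalized binomial coefficient `C(a,k) = a(a−1)⋯(a−k+1)/k!`. -/
noncomputable def genBinom (a : ℝ) (k : ℕ) : ℝ :=
  (∏ i ∈ Finset.range k, (a - i)) / (k.factorial : ℝ)

/- ### Auxiliary lemmas -/

lemma pow_le_factorial_mul_exp (m : ℕ) {x : ℝ} (hx : 0 ≤ x) :
    x ^ m ≤ (m.factorial : ℝ) * Real.exp x := by
  have h1 : x ^ m / (m.factorial : ℝ) ≤ Real.exp x := by
    refine le_trans ?_ (Real.sum_le_exp_of_nonneg hx (m + 1))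
    exact Finset.single_le_sum (f := fun i => x ^ i / (i.factorial : ℝ))
      (fun i _ => by positivity) (Finset.self_mem_range_succ m)
  rw [div_le_iff₀ (by positivity)] at h1
  linarith [h1]

lemma genBinom_succ_mul (a : ℝ) (k : ℕ) :
    ((k : ℝ) + 1) * genBinom a (k + 1) = a * genBinom (a - 1) k := by
  have h1 : ∏ i ∈ Finset.range (k + 1), (a - i) =
      (∏ i ∈ Finset.range k, ((a - 1) - i)) * a := by
    rw [Finset.prod_range_succ']
    have h2 : ∏ x ∈ Finset.range k, (a - ((x : ℕ) + 1 : ℕ)) =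
        ∏ i ∈ Finset.range k, ((a - 1) - i) := by
      apply Finset.prod_congr rfl
      intro i _
      push_cast
      ring
    rw [h2]
    norm_num
  unfold genBinom
  rw [h1, Nat.factorial_succ]
  have hk : (k.factorial : ℝ) ≠ 0 := Nat.cast_ne_zero.2 k.factorial_ne_zero
  field_simp
  push_cast
  ring

lemma taylor_rem {b : ℝ} (hb0 : 0 ≤ b) (hb1 : b < 1) :
    ∀ (m : ℕ) (a : ℝ), ∃ C > (0:ℝ), ∀ t ∈ Set.Icc (0:ℝ) b,
      |(1 - t) ^ a - ∑ k ∈ Finset.range m, genBinom a k * (-t) ^ k| ≤ C * t ^ m := by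
  intro m
  induction m with
  | zero =>
    intro a
    have hba : (0:ℝ) ≤ (1 - b) ^ a := Real.rpow_nonneg (by linarith) a
    refine ⟨(1 - b) ^ a + 1, by linarith, fun t ht => ?_⟩
    obtain ⟨ht0, htb⟩ := ht
    have h1t : (0:ℝ) < 1 - t := by linarith
    simp only [Finset.range_zero, Finset.sum_empty, sub_zero, pow_zero, mul_one]
    rw [abs_of_nonneg (Real.rpow_nonneg h1t.le a)]
    rcases le_or_gt a 0 with ha | ha
    · have := Real.rpow_le_rpow_of_nonpos (by linarith : (0:ℝ) < 1 - b)
        (by linarith : 1 - b ≤ 1 - t) ha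
      linarith
    · have := Real.rpow_le_one h1t.le (by linarith) ha.le
      linarith
  | succ m ih =>
    intro a
    obtain ⟨C, hC, hbound⟩ := ih (a - 1)
    refine ⟨|a| * C / (m + 1) + 1, by positivity, fun t ht => ?_⟩
    obtain ⟨ht0, htb⟩ := ht
    set F : ℝ → ℝ := fun t => (1 - t) ^ a - ∑ k ∈ Finset.range (m + 1), genBinom a k * (-t) ^ k with hF
    set G : ℝ → ℝ := fun s => (1 - s) ^ (a - 1) - ∑ j ∈ Finset.range m, genBinom (a - 1) j * (-s) ^ j with hG
    have hderiv : ∀ x ∈ Set.Icc (0:ℝ) b, HasDerivAt F (-a * G x) x := by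
      intro x hx
      have h1x : (0:ℝ) < 1 - x := by linarith [hx.2]
      have hd1 : HasDerivAt (fun t : ℝ => (1 - t) ^ a) (-1 * (a * (1 - x) ^ (a - 1))) x := by
        have hbase : HasDerivAt (fun t : ℝ => 1 - t) (-1) x := by
          simpa using (hasDerivAt_id x).const_sub 1
        have := (Real.hasDerivAt_rpow_const (p := a) (Or.inl h1x.ne')).comp x hbase
        exact this.congr_deriv (by ring)
      have hd2 : HasDerivAt (fun t : ℝ => ∑ k ∈ Finset.range (m + 1), genBinom a k * (-t) ^ k)
          (∑ k ∈ Finset.range (m + 1), genBinom a k * ((k : ℝ) * (-x) ^ (k - 1) * (-1))) x := by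
        apply HasDerivAt.fun_sum
        intro k _
        have hneg : HasDerivAt (fun t : ℝ => -t) (-1) x := by simpa using hasDerivAt_neg' x
        have := (hasDerivAt_pow k (-x)).comp x hneg
        simpa [mul_comm, mul_assoc] using this.const_mul (genBinom a k)
      have hsum : ∑ k ∈ Finset.range (m + 1), genBinom a k * ((k : ℝ) * (-x) ^ (k - 1) * (-1))
          = -a * ∑ j ∈ Finset.range m, genBinom (a - 1) j * (-x) ^ j := by
        rw [Finset.sum_range_succ']
        have hterm : ∀ j ∈ Finset.range m,
            genBinom a (j + 1) * (((j + 1 : ℕ) : ℝ) * (-x) ^ (j + 1 - 1) * (-1))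
            = -a * (genBinom (a - 1) j * (-x) ^ j) := by
          intro j _
          have hid := genBinom_succ_mul a j
          simp only [Nat.add_sub_cancel]
          push_cast
          linear_combination (-(-x) ^ j) * hid
        rw [Finset.sum_congr rfl hterm]
        simp [Finset.mul_sum]
      have h := hd1.sub hd2
      have heq : -1 * (a * (1 - x) ^ (a - 1))
          - ∑ k ∈ Finset.range (m + 1), genBinom a k * ((k : ℝ) * (-x) ^ (k - 1) * (-1))
          = -a * G x := by
        rw [hsum, hG]; ring
      rw [heq] at h
      exact h
    have hGcont : ContinuousOn G (Set.Icc (0:ℝ) b) := by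
      apply ContinuousOn.sub
      · apply ContinuousOn.rpow_const
        · exact (continuous_const.sub continuous_id).continuousOn
        · intro x hx
          exact Or.inl (by simp; linarith [hx.2])
      · exact (continuous_finset_sum _ fun j _ =>
          (continuous_const.mul ((continuous_neg).pow j))).continuousOn
    have hgB0 : genBinom a 0 = 1 := by simp [genBinom]
    have hF0 : F 0 = 0 := by
      simp [hF, Real.one_rpow, Finset.sum_range_succ', hgB0]
    have hsub : Set.uIcc (0:ℝ) t ⊆ Set.Icc (0:ℝ) b := by
      rw [Set.uIcc_of_le ht0]
      exact Set.Icc_subset_Icc le_rfl htb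
    have hftc : ∫ s in (0:ℝ)..t, -a * G s = F t := by
      have h := intervalIntegral.integral_eq_sub_of_hasDerivAt
        (f := F) (f' := fun s => -a * G s)
        (fun x hx => hderiv x (hsub hx))
        ((continuousOn_const.mul (hGcont.mono hsub)).intervalIntegrable)
      rw [hF0, sub_zero] at h
      exact h
    have hIoc : Set.uIoc (0:ℝ) t ⊆ Set.Icc (0:ℝ) b := fun s hs =>
      hsub (Set.uIoc_subset_uIcc hs)
    have hb1' : |∫ s in (0:ℝ)..t, -a * G s| ≤ |∫ s in (0:ℝ)..t, |a| * C * s ^ m| := by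
      have h := intervalIntegral.norm_integral_le_abs_of_norm_le
        (f := fun s => -a * G s) (g := fun s => |a| * C * s ^ m)
        (μ := MeasureTheory.volume) (a := (0:ℝ)) (b := t)
        ?_ ?_
      · simpa only [Real.norm_eq_abs] using h
      · apply MeasureTheory.ae_restrict_of_forall_mem measurableSet_uIoc
        intro s hs
        have hsmem := hIoc hs
        have := hbound s hsmem
        rw [Real.norm_eq_abs, abs_mul, abs_neg]
        calc |a| * |G s| ≤ |a| * (C * s ^ m) := by
              apply mul_le_mul_of_nonneg_left this (abs_nonneg a)
          _ = |a| * C * s ^ m := by ring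
      · apply Continuous.intervalIntegrable
        continuity
    have hval : ∫ s in (0:ℝ)..t, |a| * C * s ^ m = |a| * C * (t ^ (m + 1) / (m + 1)) := by
      rw [intervalIntegral.integral_const_mul, integral_pow]
      norm_num
    have htpow : (0:ℝ) ≤ t ^ (m + 1) := pow_nonneg ht0 _
    have hm1 : (0:ℝ) < (m:ℝ) + 1 := by positivity
    calc |F t| = |∫ s in (0:ℝ)..t, -a * G s| := by rw [hftc]
      _ ≤ |∫ s in (0:ℝ)..t, |a| * C * s ^ m| := hb1'
      _ = |a| * C * (t ^ (m + 1) / (m + 1)) := by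
          rw [hval, abs_of_nonneg (by positivity)]
      _ = |a| * C / (m + 1) * t ^ (m + 1) := by ring
      _ ≤ (|a| * C / (m + 1) + 1) * t ^ (m + 1) := by nlinarith

lemma eulerBeta_nat (k N : ℕ) :
    eulerBeta ((k : ℝ) + 1) ((N : ℝ) + 1) = ∫ t in (0:ℝ)..1, t ^ k * (1 - t) ^ N := by
  unfold eulerBeta
  rw [show ((k : ℝ) + 1 - 1) = ((k : ℕ) : ℝ) by ring,
      show ((N : ℝ) + 1 - 1) = ((N : ℕ) : ℝ) by ring]
  simp [Real.rpow_natCast]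

lemma subst_lemma (p : ℝ) (hp0 : 0 < p) (k N : ℕ) :
    ∫ t in (0:ℝ)..1, t ^ k * (1 - p * t) ^ N
      = (p ^ (k + 1))⁻¹ * ∫ u in (0:ℝ)..p, u ^ k * (1 - u) ^ N := by
  have h := intervalIntegral.integral_comp_mul_left (a := (0:ℝ)) (b := 1)
    (fun u => u ^ k * (1 - u) ^ N) hp0.ne'
  simp only [mul_zero, mul_one, smul_eq_mul] at h
  have h2 : ∫ x in (0:ℝ)..1, (p * x) ^ k * (1 - p * x) ^ N
      = p ^ k * ∫ x in (0:ℝ)..1, x ^ k * (1 - p * x) ^ N := by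
    rw [← intervalIntegral.integral_const_mul]
    apply intervalIntegral.integral_congr
    intro x _
    simp [mul_pow]; ring
  rw [h2] at h
  have hpk : (p : ℝ) ^ k ≠ 0 := pow_ne_zero _ hp0.ne'
  field_simp [pow_succ] at h ⊢
  rw [← h]; ring

lemma rpow_intervalIntegrable {a : ℝ} (ha0 : -1 < a) :
    IntervalIntegrable (fun t => (1 - t) ^ a) MeasureTheory.volume 0 1 := by
  have h := intervalIntegral.intervalIntegrable_rpow' (a := 0) (b := 1) ha0
  have h2 := h.comp_sub_left 1
  norm_num at h2
  exact h2.symm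

set_option maxHeartbeats 1000000 in
/-- **Laplace-type expansion of the integral** `∫₀¹ (1−pt)^N (1−t)^a dt`
(Lemma `lem:integration Taylor`). -/
theorem integration_Taylor
    (a p : ℝ) (ha0 : -1 < a) (ha1 : a < 0) (hp0 : 0 < p) (hp1 : p < 1)
    (m : ℕ) (hm : 0 < m) :
    ∃ C > (0 : ℝ), ∃ N₀ : ℕ, ∀ N ≥ N₀,
      |(∫ t in (0 : ℝ)..1, (1 - p * t) ^ N * (1 - t) ^ a) -
        ∑ k ∈ Finset.range m, (-1 : ℝ) ^ k * genBinom a k * p ^ (-(k : ℤ) - 1) *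
          eulerBeta ((k : ℝ) + 1) ((N : ℝ) + 1)| ≤ C / (N : ℝ) ^ m := by
  obtain ⟨C₂, hC₂, hrem⟩ := taylor_rem (b := (1/2:ℝ)) (by norm_num) (by norm_num) m a
  set P : ℝ → ℝ := fun t => ∑ k ∈ Finset.range m, genBinom a k * (-t) ^ k with hP
  set R : ℝ → ℝ := fun t => (1 - t) ^ a - P t with hR
  set D : ℝ := ∑ k ∈ Finset.range m, |genBinom a k| with hD
  have hD0 : 0 ≤ D := Finset.sum_nonneg fun k _ => abs_nonneg _
  set Q : ℝ := ∫ t in (1/2:ℝ)..1, ((1 - t) ^ a + D) with hQ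
  have hQ0 : 0 ≤ Q := by
    apply intervalIntegral.integral_nonneg (by norm_num)
    intro u hu
    have : (0:ℝ) ≤ (1 - u) ^ a := Real.rpow_nonneg (by linarith [hu.2]) a
    linarith
  set B₂ : ℝ := ∑ k ∈ Finset.range m, |genBinom a k| * (p ^ (k + 1))⁻¹ with hB₂
  have hB₂0 : 0 ≤ B₂ := Finset.sum_nonneg fun k _ =>
    mul_nonneg (abs_nonneg _) (inv_nonneg.2 (pow_nonneg hp0.le _))
  set A : ℝ := C₂ * (m.factorial : ℝ) / p ^ m with hA
  have hA0 : 0 < A := div_pos (mul_pos hC₂ (Nat.cast_pos.2 m.factorial_pos)) (pow_pos hp0 m)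
  have hq1 : ∀ᶠ n : ℕ in Filter.atTop, (n:ℝ) ^ m * (1 - p/2) ^ n < 1 :=
    (tendsto_pow_const_mul_const_pow_of_lt_one m (by linarith) (by linarith)).eventually_lt_const
      one_pos
  have hq2 : ∀ᶠ n : ℕ in Filter.atTop, (n:ℝ) ^ m * (1 - p) ^ n < 1 :=
    (tendsto_pow_const_mul_const_pow_of_lt_one m (by linarith) (by linarith)).eventually_lt_const
      one_pos
  obtain ⟨N₁, hN₁⟩ := Filter.eventually_atTop.mp hq1
  obtain ⟨N₂, hN₂⟩ := Filter.eventually_atTop.mp hq2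
  refine ⟨A + Q + B₂ + 1, by linarith, max (max N₁ N₂) 1, fun N hN => ?_⟩
  have hN1 : (1:ℕ) ≤ N := le_trans (le_max_right _ 1) hN
  have hNr : (1:ℝ) ≤ (N:ℝ) := by exact_mod_cast hN1
  have hNpos : (0:ℝ) < (N:ℝ) := by linarith
  have hNm : (0:ℝ) < (N:ℝ) ^ m := by positivity
  have hgeo1 : (1 - p/2) ^ N ≤ 1 / (N:ℝ) ^ m := by
    rw [le_div_iff₀ hNm]
    have := hN₁ N (le_trans (le_trans (le_max_left _ _) (le_max_left _ _)) hN)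
    linarith
  have hgeo2 : (1 - p) ^ N ≤ 1 / (N:ℝ) ^ m := by
    rw [le_div_iff₀ hNm]
    have := hN₂ N (le_trans (le_trans (le_max_right _ _) (le_max_left _ _)) hN)
    linarith
  have hIint : IntervalIntegrable (fun t => (1 - p*t) ^ N * (1 - t) ^ a)
      MeasureTheory.volume 0 1 :=
    (rpow_intervalIntegrable ha0).continuousOn_mul
      ((continuous_const.sub (continuous_const.mul continuous_id)).pow N).continuousOn
  have hPint : IntervalIntegrable (fun t => (1 - p*t) ^ N * P t)
      MeasureTheory.volume 0 1 := by
    apply Continuous.intervalIntegrable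
    apply Continuous.mul
    · exact (continuous_const.sub (continuous_const.mul continuous_id)).pow N
    · apply continuous_finset_sum
      intro k _
      exact continuous_const.mul (continuous_neg.pow k)
  have hRfun : (fun t => (1 - p*t) ^ N * R t)
      = fun t => (1 - p*t) ^ N * (1 - t) ^ a - (1 - p*t) ^ N * P t := by
    funext t; simp [hR, mul_sub]
  have hRint : IntervalIntegrable (fun t => (1 - p*t) ^ N * R t)
      MeasureTheory.volume 0 1 := by
    rw [hRfun]; exact hIint.sub hPint
  have hzpow : ∀ k : ℕ, p ^ (-(k:ℤ) - 1) = (p ^ (k + 1) : ℝ)⁻¹ := by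
    intro k
    rw [show (-(k:ℤ) - 1) = -((k + 1 : ℕ) : ℤ) by push_cast; ring, zpow_neg, zpow_natCast]
  have hfk_int : ∀ (k : ℕ) (x y : ℝ), IntervalIntegrable (fun u => u ^ k * (1 - u) ^ N)
      MeasureTheory.volume x y := fun k x y =>
    (((continuous_pow k).mul ((continuous_const.sub continuous_id).pow N)).intervalIntegrable _ _)
  have hterm : ∀ k ∈ Finset.range m,
      (-1:ℝ) ^ k * genBinom a k * p ^ (-(k:ℤ) - 1) * eulerBeta ((k:ℝ) + 1) ((N:ℝ) + 1)
      = (-1:ℝ) ^ k * genBinom a k * (∫ t in (0:ℝ)..1, t ^ k * (1 - p*t) ^ N)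
        + (-1:ℝ) ^ k * genBinom a k * (p ^ (k + 1))⁻¹ * (∫ u in p..(1:ℝ), u ^ k * (1 - u) ^ N) := by
    intro k _
    rw [eulerBeta_nat, hzpow,
        ← intervalIntegral.integral_add_adjacent_intervals (hfk_int k 0 p) (hfk_int k p 1),
        subst_lemma p hp0 k N]
    ring
  have hsum1 : ∑ k ∈ Finset.range m,
      (-1:ℝ) ^ k * genBinom a k * (∫ t in (0:ℝ)..1, t ^ k * (1 - p*t) ^ N)
      = ∫ t in (0:ℝ)..1, (1 - p*t) ^ N * P t := by
    have hcong : ∀ t ∈ Set.uIcc (0:ℝ) 1, (1 - p*t) ^ N * P t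
        = ∑ k ∈ Finset.range m, ((-1:ℝ) ^ k * genBinom a k) * (t ^ k * (1 - p*t) ^ N) := by
      intro t _
      rw [hP, Finset.mul_sum]
      apply Finset.sum_congr rfl
      intro k _
      rw [neg_pow]
      ring
    have hintsum : ∫ x in (0:ℝ)..1, ∑ k ∈ Finset.range m,
        ((-1:ℝ) ^ k * genBinom a k) * (x ^ k * (1 - p*x) ^ N)
        = ∑ k ∈ Finset.range m, ∫ x in (0:ℝ)..1,
          ((-1:ℝ) ^ k * genBinom a k) * (x ^ k * (1 - p*x) ^ N) :=
      intervalIntegral.integral_finset_sum (fun k _ =>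
        ((continuous_const.mul ((continuous_pow k).mul
          ((continuous_const.sub (continuous_const.mul continuous_id')).pow N))).intervalIntegrable _ _))
    rw [intervalIntegral.integral_congr hcong, hintsum]
    apply Finset.sum_congr rfl
    intro k _
    rw [intervalIntegral.integral_const_mul]
  have hkey : (∫ t in (0 : ℝ)..1, (1 - p * t) ^ N * (1 - t) ^ a) -
      ∑ k ∈ Finset.range m, (-1 : ℝ) ^ k * genBinom a k * p ^ (-(k : ℤ) - 1) *
        eulerBeta ((k : ℝ) + 1) ((N : ℝ) + 1)
      = (∫ t in (0:ℝ)..1, (1 - p*t) ^ N * R t)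
        - ∑ k ∈ Finset.range m, (-1:ℝ) ^ k * genBinom a k * (p ^ (k + 1))⁻¹ *
            (∫ u in p..(1:ℝ), u ^ k * (1 - u) ^ N) := by
    rw [Finset.sum_congr rfl hterm, Finset.sum_add_distrib, hsum1]
    have hsplit : ∫ t in (0:ℝ)..1, (1 - p*t) ^ N * R t
        = (∫ t in (0:ℝ)..1, (1 - p*t) ^ N * (1 - t) ^ a)
          - ∫ t in (0:ℝ)..1, (1 - p*t) ^ N * P t := by
      rw [hRfun, intervalIntegral.integral_sub hIint hPint]
    rw [hsplit]
    ring
  rw [hkey]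
  have hsplit2 : ∫ t in (0:ℝ)..1, (1 - p*t) ^ N * R t
      = (∫ t in (0:ℝ)..(1/2), (1 - p*t) ^ N * R t)
        + ∫ t in (1/2:ℝ)..1, (1 - p*t) ^ N * R t := by
    have hsub1 : Set.uIcc (0:ℝ) (1/2) ⊆ Set.uIcc (0:ℝ) 1 := by
      rw [Set.uIcc_of_le (by norm_num : (0:ℝ) ≤ 1/2), Set.uIcc_of_le (by norm_num : (0:ℝ) ≤ 1)]
      exact Set.Icc_subset_Icc le_rfl (by norm_num)
    have hsub2 : Set.uIcc (1/2:ℝ) 1 ⊆ Set.uIcc (0:ℝ) 1 := by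
      rw [Set.uIcc_of_le (by norm_num : (1/2:ℝ) ≤ 1), Set.uIcc_of_le (by norm_num : (0:ℝ) ≤ 1)]
      exact Set.Icc_subset_Icc (by norm_num) le_rfl
    rw [intervalIntegral.integral_add_adjacent_intervals
      (hRint.mono_set hsub1) (hRint.mono_set hsub2)]
  have hE1a : |∫ t in (0:ℝ)..(1/2), (1 - p*t) ^ N * R t| ≤ A / (N:ℝ) ^ m := by
    have hpt : ∀ t ∈ Set.uIoc (0:ℝ) (1/2), ‖(1 - p*t) ^ N * R t‖
        ≤ C₂ * ((m.factorial : ℝ) / (p * N) ^ m) := by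
      intro t ht
      rw [Set.uIoc_of_le (by norm_num : (0:ℝ) ≤ 1/2)] at ht
      obtain ⟨ht0, ht2⟩ := ht
      have h0pt : (0:ℝ) ≤ 1 - p*t := by nlinarith
      have hRb : |R t| ≤ C₂ * t ^ m := hrem t ⟨ht0.le, ht2⟩
      have he1 : 1 - p*t ≤ Real.exp (-(p*t)) := by
        linarith [Real.add_one_le_exp (-(p*t))]
      have he2 : (1 - p*t) ^ N ≤ Real.exp (-(p*N*t)) := by
        calc (1 - p*t) ^ N ≤ Real.exp (-(p*t)) ^ N := pow_le_pow_left₀ h0pt he1 N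
          _ = Real.exp (-(p*N*t)) := by rw [← Real.exp_nat_mul]; ring_nf
      have hx : (0:ℝ) ≤ p*N*t := mul_nonneg (mul_nonneg hp0.le hNpos.le) ht0.le
      have hf := pow_le_factorial_mul_exp m hx
      have hkey2 : t ^ m * Real.exp (-(p*N*t)) ≤ (m.factorial:ℝ) / (p*N) ^ m := by
        rw [Real.exp_neg, le_div_iff₀ (pow_pos (mul_pos hp0 hNpos) m : (0:ℝ) < (p*(N:ℝ)) ^ m)]
        have hinv : (0:ℝ) ≤ (Real.exp (p*N*t))⁻¹ := by positivity
        calc t ^ m * (Real.exp (p*N*t))⁻¹ * (p*N) ^ m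
            = (p*N*t) ^ m * (Real.exp (p*N*t))⁻¹ := by rw [mul_pow]; ring
          _ ≤ ((m.factorial:ℝ) * Real.exp (p*N*t)) * (Real.exp (p*N*t))⁻¹ :=
              mul_le_mul_of_nonneg_right hf hinv
          _ = (m.factorial:ℝ) := by
              field_simp
      rw [Real.norm_eq_abs, abs_mul, abs_pow, abs_of_nonneg h0pt]
      calc (1 - p*t) ^ N * |R t| ≤ Real.exp (-(p*N*t)) * (C₂ * t ^ m) := by
            apply mul_le_mul he2 hRb (abs_nonneg _) (Real.exp_nonneg _)
        _ = C₂ * (t ^ m * Real.exp (-(p*N*t))) := by ring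
        _ ≤ C₂ * ((m.factorial:ℝ) / (p*N) ^ m) :=
            mul_le_mul_of_nonneg_left hkey2 hC₂.le
    have h := intervalIntegral.norm_integral_le_of_norm_le_const hpt
    rw [Real.norm_eq_abs] at h
    have heq : C₂ * ((m.factorial : ℝ) / (p * N) ^ m) * |1/2 - (0:ℝ)|
        = A / (N:ℝ) ^ m * (1/2) := by
      rw [hA, mul_pow]
      rw [show |1/2 - (0:ℝ)| = 1/2 by norm_num]
      field_simp
      try ring
    rw [heq] at h
    have : (0:ℝ) ≤ A / (N:ℝ) ^ m := div_nonneg hA0.le hNm.le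
    linarith
  have hE1b : |∫ t in (1/2:ℝ)..1, (1 - p*t) ^ N * R t| ≤ Q / (N:ℝ) ^ m := by
    have hq1N : (0:ℝ) ≤ (1 - p/2) ^ N := pow_nonneg (by linarith) N
    have hbd : |∫ t in (1/2:ℝ)..1, (1 - p*t) ^ N * R t|
        ≤ |∫ t in (1/2:ℝ)..1, (1 - p/2) ^ N * ((1 - t) ^ a + D)| := by
      have h := intervalIntegral.norm_integral_le_abs_of_norm_le
        (f := fun t => (1 - p*t) ^ N * R t)
        (g := fun t => (1 - p/2) ^ N * ((1 - t) ^ a + D))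
        (μ := MeasureTheory.volume) (a := (1/2:ℝ)) (b := 1) ?_ ?_
      · simpa only [Real.norm_eq_abs] using h
      · apply MeasureTheory.ae_restrict_of_forall_mem measurableSet_uIoc
        intro t ht
        rw [Set.uIoc_of_le (by norm_num : (1/2:ℝ) ≤ 1)] at ht
        obtain ⟨ht2, ht1⟩ := ht
        have h1t : (0:ℝ) ≤ 1 - t := by linarith
        have h0pt : (0:ℝ) ≤ 1 - p*t := by nlinarith
        have hra : (0:ℝ) ≤ (1 - t) ^ a := Real.rpow_nonneg h1t a
        have hmono : (1 - p*t) ^ N ≤ (1 - p/2) ^ N :=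
          pow_le_pow_left₀ h0pt (by nlinarith) N
        have hPabs : |P t| ≤ D := by
          rw [hP, hD]
          refine (Finset.abs_sum_le_sum_abs _ _).trans ?_
          apply Finset.sum_le_sum
          intro k _
          rw [abs_mul, abs_pow, abs_neg, abs_of_nonneg (by linarith : (0:ℝ) ≤ t)]
          calc |genBinom a k| * t ^ k ≤ |genBinom a k| * 1 := by
                apply mul_le_mul_of_nonneg_left (pow_le_one₀ (by linarith) ht1) (abs_nonneg _)
            _ = |genBinom a k| := mul_one _
        have hRabs : |R t| ≤ (1 - t) ^ a + D := by
          rw [hR]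
          calc |(1 - t) ^ a - P t| ≤ |(1 - t) ^ a| + |P t| := abs_sub _ _
            _ ≤ (1 - t) ^ a + D := by rw [abs_of_nonneg hra]; linarith
        rw [Real.norm_eq_abs, abs_mul, abs_pow, abs_of_nonneg h0pt]
        apply mul_le_mul hmono hRabs (abs_nonneg _) hq1N
      · apply IntervalIntegrable.const_mul
        apply IntervalIntegrable.add
        · refine (rpow_intervalIntegrable ha0).mono_set ?_
          rw [Set.uIcc_of_le (by norm_num : (1/2:ℝ) ≤ 1),
              Set.uIcc_of_le (by norm_num : (0:ℝ) ≤ 1)]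
          exact Set.Icc_subset_Icc (by norm_num) le_rfl
        · exact intervalIntegrable_const
    rw [intervalIntegral.integral_const_mul, ← hQ] at hbd
    rw [abs_of_nonneg (mul_nonneg hq1N hQ0)] at hbd
    calc |∫ t in (1/2:ℝ)..1, (1 - p*t) ^ N * R t| ≤ (1 - p/2) ^ N * Q := hbd
      _ ≤ (1 / (N:ℝ) ^ m) * Q := mul_le_mul_of_nonneg_right hgeo1 hQ0
      _ = Q / (N:ℝ) ^ m := by ring
  have hE2 : |∑ k ∈ Finset.range m, (-1:ℝ) ^ k * genBinom a k * (p ^ (k + 1))⁻¹ *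
      (∫ u in p..(1:ℝ), u ^ k * (1 - u) ^ N)| ≤ B₂ / (N:ℝ) ^ m := by
    have hTk : ∀ k : ℕ, |∫ u in p..(1:ℝ), u ^ k * (1 - u) ^ N| ≤ (1 - p) ^ N := by
      intro k
      have hpt : ∀ u ∈ Set.uIoc p (1:ℝ), ‖u ^ k * (1 - u) ^ N‖ ≤ (1 - p) ^ N := by
        intro u hu
        rw [Set.uIoc_of_le hp1.le] at hu
        obtain ⟨hup, hu1⟩ := hu
        have hu0 : (0:ℝ) < u := lt_trans hp0 hup
        have h1u : (0:ℝ) ≤ 1 - u := by linarith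
        rw [Real.norm_eq_abs, abs_mul, abs_pow, abs_pow, abs_of_nonneg hu0.le,
            abs_of_nonneg h1u]
        calc u ^ k * (1 - u) ^ N ≤ 1 * (1 - p) ^ N := by
              apply mul_le_mul (pow_le_one₀ hu0.le hu1)
                (pow_le_pow_left₀ h1u (by linarith) N) (pow_nonneg h1u N) (by norm_num)
          _ = (1 - p) ^ N := one_mul _
      have h := intervalIntegral.norm_integral_le_of_norm_le_const hpt
      rw [Real.norm_eq_abs] at h
      calc |∫ u in p..(1:ℝ), u ^ k * (1 - u) ^ N| ≤ (1 - p) ^ N * |1 - p| := h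
        _ = (1 - p) ^ N * (1 - p) := by rw [abs_of_nonneg (by linarith)]
        _ ≤ (1 - p) ^ N * 1 := by
            apply mul_le_mul_of_nonneg_left (by linarith) (pow_nonneg (by linarith) N)
        _ = (1 - p) ^ N := mul_one _
    calc |∑ k ∈ Finset.range m, (-1:ℝ) ^ k * genBinom a k * (p ^ (k + 1))⁻¹ *
          (∫ u in p..(1:ℝ), u ^ k * (1 - u) ^ N)|
        ≤ ∑ k ∈ Finset.range m, |(-1:ℝ) ^ k * genBinom a k * (p ^ (k + 1))⁻¹ *
          (∫ u in p..(1:ℝ), u ^ k * (1 - u) ^ N)| := Finset.abs_sum_le_sum_abs _ _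
      _ ≤ ∑ k ∈ Finset.range m, |genBinom a k| * (p ^ (k + 1))⁻¹ * (1 - p) ^ N := by
          apply Finset.sum_le_sum
          intro k _
          rw [abs_mul, abs_mul, abs_mul, abs_pow, abs_neg, abs_one, one_pow, one_mul,
              abs_of_nonneg (inv_nonneg.2 (pow_nonneg hp0.le (k+1)))]
          exact mul_le_mul_of_nonneg_left (hTk k)
            (mul_nonneg (abs_nonneg _) (inv_nonneg.2 (pow_nonneg hp0.le _)))
      _ = B₂ * (1 - p) ^ N := by rw [hB₂, Finset.sum_mul]
      _ ≤ B₂ * (1 / (N:ℝ) ^ m) := mul_le_mul_of_nonneg_left hgeo2 hB₂0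
      _ = B₂ / (N:ℝ) ^ m := by ring
  calc |(∫ t in (0:ℝ)..1, (1 - p*t) ^ N * R t)
        - ∑ k ∈ Finset.range m, (-1:ℝ) ^ k * genBinom a k * (p ^ (k + 1))⁻¹ *
            (∫ u in p..(1:ℝ), u ^ k * (1 - u) ^ N)|
      ≤ |∫ t in (0:ℝ)..1, (1 - p*t) ^ N * R t|
        + |∑ k ∈ Finset.range m, (-1:ℝ) ^ k * genBinom a k * (p ^ (k + 1))⁻¹ *
            (∫ u in p..(1:ℝ), u ^ k * (1 - u) ^ N)| := abs_sub _ _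
    _ ≤ (|∫ t in (0:ℝ)..(1/2), (1 - p*t) ^ N * R t|
          + |∫ t in (1/2:ℝ)..1, (1 - p*t) ^ N * R t|) + B₂ / (N:ℝ) ^ m := by
        rw [hsplit2]
        exact add_le_add (abs_add_le _ _) hE2
    _ ≤ (A / (N:ℝ) ^ m + Q / (N:ℝ) ^ m) + B₂ / (N:ℝ) ^ m := by
        exact add_le_add (add_le_add hE1a hE1b) le_rfl
    _ ≤ (A + Q + B₂ + 1) / (N:ℝ) ^ m := by
        rw [show (A/(N:ℝ)^m + Q/(N:ℝ)^m) + B₂/(N:ℝ)^m = (A+Q+B₂)/(N:ℝ)^m by ring,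
            div_le_div_iff₀ hNm hNm]
        nlinarith [hNm.le]
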